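/- Let g be proper, lsc, ρ-weakly convex with γρ < 1, and set g_ρ = g + (ρ/2)‖·‖². Then for all x, g^γ(x) = g_ρ^{γ/(1-γρ)}(x/(1-γρ)) - (ρ/(2(1-γρ)))‖x‖², and Prox_{γg}(x) = Prox_{(γ/(1-γρ)) g_ρ}(x/(1-γρ)). -/

import Mathlib

open scoped RealInnerProductSpace
open Set

lemma aux_bdd {d : ℕ} (G : EuclideanSpace ℝ (Fin d) → ℝ)
    (hG : ConvexOn ℝ Set.univ G) (hc : Continuous G)
    (x' : EuclideanSpace ℝ (Fin d)) (α : ℝ) (hα : 0 < α) :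
    BddBelow (Set.range (fun y => α * ‖x' - y‖ ^ 2 + G y)) := by
  obtain ⟨m, hmB, hmin⟩ := (isCompact_closedBall x' 1).exists_isMinOn
    ⟨x', by simp⟩ hc.continuousOn
  set K : ℝ := G x' - G m with hK
  refine ⟨min (G m) (G x' - K ^ 2 / (4 * α)), ?_⟩
  rintro _ ⟨y, rfl⟩
  dsimp only
  set r : ℝ := ‖x' - y‖ with hr
  have hr0 : 0 ≤ r := norm_nonneg _
  by_cases hr1 : r ≤ 1
  · have hyB : y ∈ Metric.closedBall x' 1 := by
      simp [Metric.mem_closedBall, dist_eq_norm, ← norm_sub_rev x' y, ← hr, hr1]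
    have h1 : G m ≤ G y := hmin hyB
    have h2 : 0 ≤ α * r ^ 2 := by positivity
    simp only [min_le_iff]
    left; linarith
  · push_neg at hr1
    have hrpos : 0 < r := lt_trans one_pos hr1
    have hrinv : 0 ≤ r⁻¹ := by positivity
    have hrr : r * r⁻¹ = 1 := mul_inv_cancel₀ (ne_of_gt hrpos)
    have hrinv1 : r⁻¹ ≤ 1 := by nlinarith
    set z := x' + r⁻¹ • (y - x') with hz
    have hzc : z = (1 - r⁻¹) • x' + r⁻¹ • y := by
      rw [hz]; module
    have hzB : z ∈ Metric.closedBall x' 1 := by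
      have hd : dist z x' = ‖r⁻¹ • (y - x')‖ := by
        rw [hz, dist_eq_norm, add_sub_cancel_left]
      rw [Metric.mem_closedBall, hd, norm_smul, norm_sub_rev, ← hr,
        Real.norm_eq_abs, abs_of_nonneg hrinv]
      rw [inv_mul_le_iff₀ hrpos]; linarith
    have hGz : G m ≤ G z := hmin hzB
    have hconvz : G z ≤ (1 - r⁻¹) * G x' + r⁻¹ * G y := by
      have := hG.2 (mem_univ x') (mem_univ y) (by linarith : (0:ℝ) ≤ 1 - r⁻¹)
        hrinv (by ring)
      rw [← hzc] at this
      exact this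
    have hGy : G x' - K * r ≤ G y := by
      have h1 : r * (G m) ≤ r * ((1 - r⁻¹) * G x' + r⁻¹ * G y) :=
        mul_le_mul_of_nonneg_left (le_trans hGz hconvz) (le_of_lt hrpos)
      have h2 : r * ((1 - r⁻¹) * G x' + r⁻¹ * G y) = (r - 1) * G x' + G y := by
        field_simp
      rw [h2] at h1
      nlinarith
    have h5 : K * r - α * r ^ 2 ≤ K ^ 2 / (4 * α) := by
      rw [le_div_iff₀ (by positivity)]
      nlinarith [sq_nonneg (K - 2 * α * r)]
    simp only [min_le_iff]
    right
    clear_value K r z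
    linarith

theorem moreau_envelope_weakly_convex_shift {d : ℕ}
    (g : EuclideanSpace ℝ (Fin d) → ℝ) (ρ γ : ℝ) (hγ : 0 < γ) (hγρ : γ * ρ < 1)
    (hlsc : LowerSemicontinuous g)
    (hconv : ConvexOn ℝ Set.univ (fun z => g z + ρ / 2 * ‖z‖ ^ 2)) :
    (∀ x : EuclideanSpace ℝ (Fin d),
      (⨅ y, (1 / (2 * γ)) * ‖x - y‖ ^ 2 + g y) =
        (⨅ y, (1 / (2 * (γ / (1 - γ * ρ)))) * ‖(1 - γ * ρ)⁻¹ • x - y‖ ^ 2 +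
          (g y + ρ / 2 * ‖y‖ ^ 2)) - ρ / (2 * (1 - γ * ρ)) * ‖x‖ ^ 2) ∧
    (∀ x p : EuclideanSpace ℝ (Fin d),
      IsMinOn (fun y => (1 / (2 * γ)) * ‖x - y‖ ^ 2 + g y) Set.univ p ↔
      IsMinOn (fun y => (1 / (2 * (γ / (1 - γ * ρ)))) * ‖(1 - γ * ρ)⁻¹ • x - y‖ ^ 2 +
        (g y + ρ / 2 * ‖y‖ ^ 2)) Set.univ p) := by
  have hs : (0:ℝ) < 1 - γ * ρ := by linarith
  have hs' : (1:ℝ) - γ * ρ ≠ 0 := ne_of_gt hs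
  have hγ' : γ ≠ 0 := ne_of_gt hγ
  -- key algebraic identity
  have key : ∀ x y : EuclideanSpace ℝ (Fin d),
      (1 / (2 * (γ / (1 - γ * ρ)))) * ‖(1 - γ * ρ)⁻¹ • x - y‖ ^ 2 +
        (g y + ρ / 2 * ‖y‖ ^ 2) =
      ((1 / (2 * γ)) * ‖x - y‖ ^ 2 + g y) + ρ / (2 * (1 - γ * ρ)) * ‖x‖ ^ 2 := by
    intro x y
    have e1 : ‖x - y‖ ^ 2 = ‖x‖ ^ 2 - 2 * ⟪x, y⟫ + ‖y‖ ^ 2 := norm_sub_sq_real x y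
    have e2 : ‖(1 - γ * ρ)⁻¹ • x - y‖ ^ 2 =
        ((1 - γ * ρ)⁻¹) ^ 2 * ‖x‖ ^ 2 - 2 * ((1 - γ * ρ)⁻¹ * ⟪x, y⟫) + ‖y‖ ^ 2 := by
      rw [norm_sub_sq_real, norm_smul, real_inner_smul_left, Real.norm_eq_abs,
        abs_of_pos (inv_pos.mpr hs), mul_pow]
    rw [e1, e2]
    field_simp
    ring
  -- continuity of g_ρ
  have hGcont : Continuous (fun z => g z + ρ / 2 * ‖z‖ ^ 2) := by
    rw [← continuousOn_univ]
    exact hconv.continuousOn isOpen_univ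
  constructor
  · intro x
    set c : ℝ := ρ / (2 * (1 - γ * ρ)) * ‖x‖ ^ 2 with hc
    set f : EuclideanSpace ℝ (Fin d) → ℝ := fun y => (1 / (2 * γ)) * ‖x - y‖ ^ 2 + g y
      with hf
    have hbdd : BddBelow (Set.range f) := by
      have hb2 := aux_bdd (fun z => g z + ρ / 2 * ‖z‖ ^ 2) hconv hGcont
        ((1 - γ * ρ)⁻¹ • x) ((1 - γ * ρ) / (2 * γ)) (by positivity)
      obtain ⟨b, hb⟩ := hb2
      refine ⟨b - c, ?_⟩
      rintro _ ⟨y, rfl⟩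
      have h1 := hb ⟨y, rfl⟩
      simp only at h1
      have h2 : (1 - γ * ρ) / (2 * γ) * ‖(1 - γ * ρ)⁻¹ • x - y‖ ^ 2 +
          (g y + ρ / 2 * ‖y‖ ^ 2) = f y + c := by
        rw [hf, hc, ← key x y]
        congr 2
        field_simp
      rw [h2] at h1
      linarith
    have heq : (fun y => (1 / (2 * (γ / (1 - γ * ρ)))) * ‖(1 - γ * ρ)⁻¹ • x - y‖ ^ 2 +
        (g y + ρ / 2 * ‖y‖ ^ 2)) = fun y => f y + c := by
      funext y; rw [key x y]
    rw [heq]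
    have := (OrderIso.addRight c).map_ciInf hbdd
    simp only [OrderIso.addRight_apply] at this
    rw [← this]
    ring
  · intro x p
    constructor
    · intro hp y hy
      have h1 := hp (mem_univ y)
      simp only [Set.mem_setOf_eq] at h1 ⊢
      rw [key x, key x]
      exact add_le_add_left h1 _
    · intro hp y hy
      have h1 := hp (mem_univ y)
      simp only [Set.mem_setOf_eq, key x] at h1
      simp only [Set.mem_setOf_eq]
      exact le_of_add_le_add_right h1
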